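/- Let R be a finite local ring with maximal ideal of order m such that R is not isomorphic to F_3 and R/M is not isomorphic to F_2 (equivalently |R|/m ≥ 3 and |R^×| ≥ 3). Then the energy of the line graph of the unitary Cayley graph G_R equals 2|R|(|R^×| − 2). -/

import Mathlib

open Polynomial

open Polynomial

/-- The unitary Cayley graph of a finite commutative ring `R`. -/
def unitaryCayley (R : Type*) [CommRing R] [Fintype R] [DecidableEq R] : SimpleGraph R where
  Adj x y := x ≠ y ∧ IsUnit (x - y)
  symm := by
    constructor
    intro x y h
    exact ⟨h.1.symm, by simpa using h.2.neg⟩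
  loopless := ⟨fun x h => h.1 rfl⟩

instance unitaryCayley.instDecidableRel (R : Type*) [CommRing R] [Fintype R] [DecidableEq R] :
    DecidableRel (unitaryCayley R).Adj := fun a b =>
  decidable_of_iff (a ≠ b ∧ ∃ c, (a - b) * c = 1)
    (and_congr Iff.rfl isUnit_iff_exists_inv.symm)

/-- An `r`-regular graph is Ramanujan if every adjacency eigenvalue other than `±r`
has absolute value at most `2 * sqrt (r - 1)`. -/
def IsRamanujan {V : Type*} [Fintype V] [DecidableEq V] (G : SimpleGraph V)
    [DecidableRel G.Adj] (r : ℕ) : Prop :=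
  ∀ μ ∈ (SimpleGraph.adjMatrix ℝ G).charpoly.roots,
    |μ| ≠ (r : ℝ) → |μ| ≤ 2 * Real.sqrt ((r : ℝ) - 1)

/-- The energy of a graph: the sum of absolute values of its adjacency eigenvalues. -/
noncomputable def graphEnergy {V : Type*} [Fintype V] [DecidableEq V] (G : SimpleGraph V)
    [DecidableRel G.Adj] : ℝ :=
  ((SimpleGraph.adjMatrix ℝ G).charpoly.roots.map (fun μ => |μ|)).sum

noncomputable instance lineGraph.instDecidableRel {V : Type*} (G : SimpleGraph V) :
    DecidableRel G.lineGraph.Adj := Classical.decRel _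

/-! ### Auxiliary spectral lemmas -/

section Spectral

open Matrix

variable {n : Type*} [Fintype n] [DecidableEq n]

lemma my_charpoly_diagonal (d : n → ℝ) :
    (Matrix.diagonal d).charpoly = ∏ i, (X - C (d i)) := by
  have h : charmatrix (Matrix.diagonal d) = Matrix.diagonal (fun i => X - C (d i)) := by
    ext i j
    by_cases hij : i = j
    · subst hij; simp [charmatrix_apply_eq]
    · simp [charmatrix_apply_ne _ _ _ hij, Matrix.diagonal_apply_ne _ hij]
  rw [Matrix.charpoly, h, Matrix.det_diagonal]

lemma my_charpoly_conj (U D V : Matrix n n ℝ) (hUV : U * V = 1) (hVU : V * U = 1) :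
    (U * D * V).charpoly = D.charpoly := by
  have hch : charmatrix (U * D * V) = (U.map C) * charmatrix D * (V.map C) := by
    unfold charmatrix
    rw [Matrix.mul_sub, Matrix.sub_mul]
    congr 1
    · show _ = U.map C * (Matrix.scalar n X) * V.map C
      have hcomm : U.map C * (Matrix.scalar n X) = (Matrix.scalar n X) * U.map C :=
        (Matrix.scalar_commute X (fun r => (Commute.all _ _)) (U.map C)).symm
      rw [hcomm, Matrix.mul_assoc, ← Matrix.map_mul, hUV]
      simp
    · show _ = U.map C * ((C : ℝ →+* ℝ[X]).mapMatrix D) * V.map C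
      simp only [RingHom.mapMatrix_apply]
      rw [← Matrix.map_mul, ← Matrix.map_mul]
  rw [Matrix.charpoly, hch, Matrix.det_mul, Matrix.det_mul, mul_comm, ← mul_assoc,
    ← Matrix.det_mul, ← Matrix.map_mul, hVU]
  simp [Matrix.charpoly]

lemma my_herm_charpoly (A : Matrix n n ℝ) (hA : A.IsHermitian) :
    A.charpoly = ∏ i, (X - C (hA.eigenvalues i)) := by
  have hsp := hA.spectral_theorem
  set U : Matrix n n ℝ := (hA.eigenvectorUnitary : Matrix n n ℝ) with hU
  have hUV : U * star U = 1 := (Matrix.mem_unitaryGroup_iff).mp hA.eigenvectorUnitary.2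
  have hVU : star U * U = 1 := (Matrix.mem_unitaryGroup_iff').mp hA.eigenvectorUnitary.2
  have hD : Matrix.diagonal (RCLike.ofReal ∘ hA.eigenvalues) = Matrix.diagonal hA.eigenvalues := by
    congr 1
  calc A.charpoly = (U * Matrix.diagonal (RCLike.ofReal ∘ hA.eigenvalues) * star U).charpoly := by
        exact congrArg Matrix.charpoly hsp
    _ = (Matrix.diagonal hA.eigenvalues).charpoly := by
        rw [hD]; exact my_charpoly_conj _ _ _ hUV hVU
    _ = ∏ i, (X - C (hA.eigenvalues i)) := my_charpoly_diagonal _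

lemma my_herm_trace (A : Matrix n n ℝ) (hA : A.IsHermitian) :
    A.trace = ∑ i, hA.eigenvalues i := by
  have h := congrArg Matrix.trace hA.spectral_theorem
  rw [Unitary.conjStarAlgAut_apply, Matrix.trace_mul_cycle,
    (Matrix.mem_unitaryGroup_iff').mp hA.eigenvectorUnitary.2, Matrix.one_mul,
    Matrix.trace_diagonal] at h
  simpa using h

lemma my_charpoly_sub_smul_one (M : Matrix n n ℝ) (c : ℝ) :
    (M - c • 1).charpoly = M.charpoly.comp (X + C c) := by
  let φ : ℝ[X] →+* ℝ[X] := Polynomial.eval₂RingHom Polynomial.C (X + C c)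
  have hφ : ∀ p : ℝ[X], p.comp (X + C c) = φ p := fun p => rfl
  rw [Matrix.charpoly, Matrix.charpoly, hφ, RingHom.map_det]
  congr 1
  ext i j
  by_cases hij : i = j
  · subst hij
    simp [charmatrix_apply_eq, φ, Matrix.sub_apply, Matrix.smul_apply, Matrix.one_apply]
    ring
  · simp [charmatrix_apply_ne _ _ _ hij, φ, Matrix.sub_apply, Matrix.smul_apply,
      Matrix.one_apply_ne hij]

lemma my_energy_shift (S : Matrix n n ℝ) (hS : S.IsHermitian) (T : ℝ) (k : ℕ)
    (h2 : ∀ i, hS.eigenvalues i = 0 ∨ 2 ≤ hS.eigenvalues i)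
    (hT : S.trace = T)
    (hk : Fintype.card {i // hS.eigenvalues i ≠ 0} = k) :
    (((S - (2:ℝ) • 1).charpoly.roots).map (fun μ => |μ|)).sum
      = T + 2 * (Fintype.card n) - 4 * k := by
  have hcp : (S - (2:ℝ) • 1).charpoly = ∏ i, (X - C (hS.eigenvalues i - 2)) := by
    rw [my_charpoly_sub_smul_one, my_herm_charpoly S hS]
    have : ((∏ i, (X - C (hS.eigenvalues i))).comp (X + C 2))
        = ∏ i, ((X - C (hS.eigenvalues i)).comp (X + C 2)) := by
      simp only [Polynomial.comp, Polynomial.eval₂_finset_prod]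
    rw [this]
    refine Finset.prod_congr rfl fun i _ => ?_
    rw [Polynomial.sub_comp, Polynomial.X_comp, Polynomial.C_comp]
    rw [Polynomial.C_sub]
    ring
  have hroots : (S - (2:ℝ) • 1).charpoly.roots
      = Finset.univ.val.map (fun i => hS.eigenvalues i - 2) := by
    rw [hcp]
    have : (∏ i, (X - C (hS.eigenvalues i - 2))) =
        ((Finset.univ.val.map (fun i => hS.eigenvalues i - 2)).map fun a => X - C a).prod := by
      rw [Multiset.map_map]; rfl
    rw [this, Polynomial.roots_multiset_prod_X_sub_C]
  rw [hroots, Multiset.map_map]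
  rw [show ((Multiset.map ((fun μ => |μ|) ∘ fun i => hS.eigenvalues i - 2) Finset.univ.val)).sum
      = ∑ i, |hS.eigenvalues i - 2| from rfl]
  have habs : ∀ i, |hS.eigenvalues i - 2|
      = hS.eigenvalues i - 2 + (if hS.eigenvalues i = 0 then 4 else 0) := by
    intro i
    rcases h2 i with h | h
    · rw [h]; norm_num
    · rw [if_neg (by linarith), abs_of_nonneg (by linarith)]; ring
  rw [Finset.sum_congr rfl (fun i _ => habs i), Finset.sum_add_distrib]
  have h1 : (∑ i, (hS.eigenvalues i - 2)) = T - 2 * Fintype.card n := by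
    rw [Finset.sum_sub_distrib, ← my_herm_trace S hS, hT]
    simp [mul_comm]
  have hzero : (∑ i, (if hS.eigenvalues i = 0 then (4:ℝ) else 0))
      = 4 * ((Fintype.card n : ℝ) - k) := by
    rw [← Finset.sum_filter]
    rw [Finset.sum_const]
    have hcard : (Finset.univ.filter (fun i => hS.eigenvalues i = 0)).card
        = Fintype.card n - k := by
      have h1 : Fintype.card {i // ¬ hS.eigenvalues i ≠ 0}
          = Fintype.card n - Fintype.card {i // hS.eigenvalues i ≠ 0} :=
        Fintype.card_subtype_compl _
      rw [hk] at h1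
      rw [← h1]
      rw [Fintype.card_subtype]
      congr 1
      ext i
      simp
    rw [hcard]
    have hle : k ≤ Fintype.card n := by
      rw [← hk]; exact Fintype.card_subtype_le _
    rw [nsmul_eq_mul, Nat.cast_sub hle]
    ring
  rw [h1, hzero]
  ring

end Spectral

/-! ### Incidence matrix lemmas -/

section Incidence

open Matrix Finset

variable {V : Type*} [Fintype V] [DecidableEq V] (G : SimpleGraph V) [DecidableRel G.Adj]

noncomputable def eIncM : Matrix V G.edgeSet ℝ := fun v e => G.incMatrix ℝ v e

lemma eIncM_mul_transpose (r : ℕ) (hreg : ∀ v, G.degree v = r) :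
    eIncM G * (eIncM G)ᵀ = G.adjMatrix ℝ + (r : ℝ) • 1 := by
  ext a b
  have hfull : (eIncM G * (eIncM G)ᵀ) a b
      = (G.incMatrix ℝ * (G.incMatrix ℝ)ᵀ) a b := by
    simp only [Matrix.mul_apply, eIncM, Matrix.transpose_apply]
    rw [Finset.sum_set_coe (f := fun e => G.incMatrix ℝ a e * G.incMatrix ℝ b e)]
    apply Finset.sum_subset (Finset.subset_univ _)
    intro e _ he
    have : e ∉ G.incidenceSet a := fun hc => he (Set.mem_toFinset.2 hc.1)
    rw [G.incMatrix_of_notMem_incidenceSet this, zero_mul]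
  rw [hfull, SimpleGraph.incMatrix_mul_transpose]
  by_cases hab : a = b
  · subst hab
    simp [hreg a, Matrix.one_apply]
  · simp [hab, Matrix.one_apply_ne hab, SimpleGraph.adjMatrix_apply]

lemma transpose_eIncM_mul :
    (eIncM G)ᵀ * eIncM G = G.lineGraph.adjMatrix ℝ + (2 : ℝ) • 1 := by
  ext e f
  have hterm : ∀ a : V, G.incMatrix ℝ a e * G.incMatrix ℝ a f
      = if a ∈ (e : Sym2 V) ∧ a ∈ (f : Sym2 V) then 1 else 0 := by
    intro a
    by_cases h1 : a ∈ (e : Sym2 V) <;> by_cases h2 : a ∈ (f : Sym2 V)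
    · rw [G.incMatrix_of_mem_incidenceSet ⟨e.2, h1⟩, G.incMatrix_of_mem_incidenceSet ⟨f.2, h2⟩]
      simp [h1, h2]
    · rw [G.incMatrix_of_notMem_incidenceSet (fun hc => h2 hc.2)]
      simp [h2]
    · rw [G.incMatrix_of_notMem_incidenceSet (fun hc => h1 hc.2)]
      simp [h1]
    · rw [G.incMatrix_of_notMem_incidenceSet (fun hc => h1 hc.2)]
      simp [h1]
  have hsum : ((eIncM G)ᵀ * eIncM G) e f
      = ((Finset.univ.filter (fun a => a ∈ (e : Sym2 V) ∧ a ∈ (f : Sym2 V))).card : ℝ) := by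
    simp only [Matrix.mul_apply, eIncM, Matrix.transpose_apply]
    rw [Finset.sum_congr rfl (fun a _ => hterm a)]
    simp [Finset.sum_ite_eq]
  rw [hsum]
  by_cases hef : e = f
  · subst hef
    obtain ⟨x, y⟩ := e
    induction x using Sym2.ind with | _ u v =>
    have huv : u ≠ v := fun h => (G.not_isDiag_of_mem_edgeSet y) (h ▸ Sym2.mk_isDiag_iff.2 rfl)
    have : Finset.univ.filter (fun a => a ∈ s(u,v) ∧ a ∈ s(u,v)) = {u, v} := by
      ext a; simp [Sym2.mem_iff, and_self, or_comm]
    rw [this, Finset.card_pair huv]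
    simp [Matrix.one_apply, SimpleGraph.adjMatrix_apply, (G.lineGraph.loopless.irrefl _ : ¬ _)]
  · by_cases hadj : G.lineGraph.Adj e f
    · obtain ⟨hne, u, hu1, hu2⟩ := SimpleGraph.lineGraph_adj_iff_exists.1 hadj
      have : Finset.univ.filter (fun a => a ∈ (e : Sym2 V) ∧ a ∈ (f : Sym2 V)) = {u} := by
        ext a
        simp only [Finset.mem_filter, Finset.mem_univ, true_and, Finset.mem_singleton]
        constructor
        · rintro ⟨ha1, ha2⟩
          by_contra hau
          have he' : (e : Sym2 V) = s(a, u) := (Sym2.mem_and_mem_iff hau).1 ⟨ha1, hu1⟩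
          have hf' : (f : Sym2 V) = s(a, u) := (Sym2.mem_and_mem_iff hau).1 ⟨ha2, hu2⟩
          exact hne (Subtype.ext (he'.trans hf'.symm))
        · rintro rfl; exact ⟨hu1, hu2⟩
      rw [this, Finset.card_singleton]
      simp [Matrix.one_apply_ne hef, SimpleGraph.adjMatrix_apply, hadj]
    · have : Finset.univ.filter (fun a => a ∈ (e : Sym2 V) ∧ a ∈ (f : Sym2 V)) = ∅ := by
        ext a
        simp only [Finset.mem_filter, Finset.mem_univ, true_and, Finset.notMem_empty, iff_false]
        rintro ⟨ha1, ha2⟩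
        exact hadj ⟨fun h => hef h, a, ha1, ha2⟩
      rw [this]
      simp [Matrix.one_apply_ne hef, SimpleGraph.adjMatrix_apply, hadj]

end Incidence


section EigHelpers

open Matrix

variable {n : Type*} [Fintype n] [DecidableEq n]

lemma my_eig_vec (P : Matrix n n ℝ) (hP : P.IsHermitian) (i : n) (c : ℝ) :
    (P - c • 1) *ᵥ ⇑(hP.eigenvectorBasis i)
      = (hP.eigenvalues i - c) • ⇑(hP.eigenvectorBasis i) := by
  rw [Matrix.sub_mulVec, hP.mulVec_eigenvectorBasis, Matrix.smul_mulVec,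
    Matrix.one_mulVec, sub_smul]

lemma my_eigvec_ne_zero (P : Matrix n n ℝ) (hP : P.IsHermitian) (i : n) :
    ⇑(hP.eigenvectorBasis i) ≠ (0 : n → ℝ) := fun h =>
  hP.eigenvectorBasis.orthonormal.ne_zero i ((WithLp.ofLp_eq_zero 2).mp h)

lemma my_eig_root3 (P : Matrix n n ℝ) (hP : P.IsHermitian) (a b c : ℝ)
    (h : (P - a • 1) * ((P - b • 1) * (P - c • 1)) = 0) (i : n) :
    hP.eigenvalues i = a ∨ hP.eigenvalues i = b ∨ hP.eigenvalues i = c := by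
  set ν := hP.eigenvalues i with hν
  set v := ⇑(hP.eigenvectorBasis i) with hv
  have e1 : ((P - b • 1) * (P - c • 1)) *ᵥ v = ((ν - b) * (ν - c)) • v := by
    rw [← Matrix.mulVec_mulVec, my_eig_vec, Matrix.mulVec_smul, my_eig_vec, smul_smul,
      mul_comm]
  have e2 : ((P - a • 1) * ((P - b • 1) * (P - c • 1))) *ᵥ v
      = ((ν - a) * ((ν - b) * (ν - c))) • v := by
    rw [← Matrix.mulVec_mulVec, e1, Matrix.mulVec_smul, my_eig_vec, smul_smul, mul_comm]
  rw [h, Matrix.zero_mulVec] at e2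
  rcases smul_eq_zero.mp e2.symm with h0 | h0
  · rcases mul_eq_zero.mp h0 with h1 | h1
    · exact Or.inl (by linarith [sub_eq_zero.mp h1])
    · rcases mul_eq_zero.mp h1 with h2 | h2
      · exact Or.inr (Or.inl (by linarith [sub_eq_zero.mp h2]))
      · exact Or.inr (Or.inr (by linarith [sub_eq_zero.mp h2]))
  · exact absurd h0 (my_eigvec_ne_zero P hP i)

lemma my_eig_root4 (P : Matrix n n ℝ) (hP : P.IsHermitian) (a b c : ℝ)
    (h : (P - a • 1) * ((P - b • 1) * ((P - c • 1) * P)) = 0) (i : n) :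
    hP.eigenvalues i = a ∨ hP.eigenvalues i = b ∨ hP.eigenvalues i = c
      ∨ hP.eigenvalues i = 0 := by
  set ν := hP.eigenvalues i with hν
  set v := ⇑(hP.eigenvectorBasis i) with hv
  have e0 : P *ᵥ v = ν • v := hP.mulVec_eigenvectorBasis i
  have e1 : ((P - c • 1) * P) *ᵥ v = ((ν - c) * ν) • v := by
    rw [← Matrix.mulVec_mulVec, e0, Matrix.mulVec_smul, my_eig_vec, smul_smul, mul_comm]
  have e2 : ((P - b • 1) * ((P - c • 1) * P)) *ᵥ v = ((ν - b) * ((ν - c) * ν)) • v := by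
    rw [← Matrix.mulVec_mulVec, e1, Matrix.mulVec_smul, my_eig_vec, smul_smul, mul_comm]
  have e3 : ((P - a • 1) * ((P - b • 1) * ((P - c • 1) * P))) *ᵥ v
      = ((ν - a) * ((ν - b) * ((ν - c) * ν))) • v := by
    rw [← Matrix.mulVec_mulVec, e2, Matrix.mulVec_smul, my_eig_vec, smul_smul, mul_comm]
  rw [h, Matrix.zero_mulVec] at e3
  rcases smul_eq_zero.mp e3.symm with h0 | h0
  · rcases mul_eq_zero.mp h0 with h1 | h1
    · exact Or.inl (by linarith [sub_eq_zero.mp h1])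
    · rcases mul_eq_zero.mp h1 with h2 | h2
      · exact Or.inr (Or.inl (by linarith [sub_eq_zero.mp h2]))
      · rcases mul_eq_zero.mp h2 with h3 | h3
        · exact Or.inr (Or.inr (Or.inl (by linarith [sub_eq_zero.mp h3])))
        · exact Or.inr (Or.inr (Or.inr h3))
  · exact absurd h0 (my_eigvec_ne_zero P hP i)

end EigHelpers

section RingCount

open Matrix Finset

variable {R : Type*} [CommRing R] [IsLocalRing R] [Fintype R] [DecidableEq R]

lemma my_not_isUnit_iff_mem (M : Ideal R) (hM : M.IsMaximal) (x : R) :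
    ¬ IsUnit x ↔ x ∈ M := by
  rw [IsLocalRing.eq_maximalIdeal hM]
  exact (IsLocalRing.mem_maximalIdeal x).symm.trans mem_nonunits_iff |>.symm

lemma my_uc_adj (x y : R) : (unitaryCayley R).Adj x y ↔ IsUnit (x - y) := by
  constructor
  · exact fun h => h.2
  · intro h
    refine ⟨fun hxy => ?_, h⟩
    subst hxy
    simp only [sub_self] at h
    exact not_isUnit_zero h

lemma my_card_units : (Finset.univ.filter (fun x : R => IsUnit x)).card = Nat.card Rˣ := by
  rw [Nat.card_eq_fintype_card, ← Fintype.card_subtype]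
  refine (Fintype.card_congr ?_).symm
  exact { toFun := fun u => ⟨(u : R), u.isUnit⟩
          invFun := fun x => x.2.unit
          left_inv := fun u => Units.ext (IsUnit.unit_spec u.isUnit)
          right_inv := fun x => Subtype.ext (IsUnit.unit_spec x.2) }

lemma my_card_coset (M : Ideal R) (x : R) [DecidablePred (· ∈ M)] :
    (Finset.univ.filter (fun z : R => x - z ∈ M)).card = Nat.card M := by
  classical
  rw [← Fintype.card_subtype]
  rw [Nat.card_eq_fintype_card]
  exact Fintype.card_congr ((Equiv.subLeft x).subtypeEquiv (fun z => Iff.rfl))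

lemma my_card_coset' (M : Ideal R) (y : R) [DecidablePred (· ∈ M)] :
    (Finset.univ.filter (fun z : R => z - y ∈ M)).card = Nat.card M := by
  classical
  rw [← Fintype.card_subtype]
  rw [Nat.card_eq_fintype_card]
  exact Fintype.card_congr ((Equiv.subRight y).subtypeEquiv (fun z => Iff.rfl))

lemma my_degree (x : R) : (unitaryCayley R).degree x = Nat.card Rˣ := by
  rw [← my_card_units]
  rw [SimpleGraph.degree, SimpleGraph.neighborFinset_eq_filter]
  apply Finset.card_bij' (fun y _ => x - y) (fun u _ => x - u)
  · intro y hy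
    simp only [Finset.mem_filter, Finset.mem_univ, true_and] at hy ⊢
    exact (my_uc_adj x y).mp hy
  · intro u hu
    simp only [Finset.mem_filter, Finset.mem_univ, true_and] at hu ⊢
    rw [my_uc_adj]
    simpa using hu
  · intro y _; ring
  · intro u _; ring

end RingCount


section RingCount2

open Matrix Finset

variable {R : Type*} [CommRing R] [IsLocalRing R] [Fintype R] [DecidableEq R]

lemma my_card_partition (M : Ideal R) (hM : M.IsMaximal) :
    Fintype.card R = Nat.card Rˣ + Nat.card M := by
  classical
  have hM' : (Finset.univ.filter (fun x : R => x ∈ M)).card = Nat.card M := by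
    rw [← Fintype.card_subtype, Nat.card_eq_fintype_card]
  have hfil : Finset.univ.filter (fun x : R => ¬ IsUnit x)
      = Finset.univ.filter (fun x : R => x ∈ M) := by
    apply Finset.filter_congr
    intro x _
    exact my_not_isUnit_iff_mem M hM x
  rw [← my_card_units, ← hM', ← hfil,
    Finset.card_filter_add_card_filter_not (p := fun x : R => IsUnit x),
    Finset.card_univ]

lemma my_uc_quad (M : Ideal R) (hM : M.IsMaximal) :
    ((unitaryCayley R).adjMatrix ℝ) * ((unitaryCayley R).adjMatrix ℝ)
        + (Nat.card M : ℝ) • ((unitaryCayley R).adjMatrix ℝ)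
      = (Nat.card Rˣ : ℝ) • Matrix.of (fun (_ _ : R) => (1:ℝ)) := by
  classical
  have hn := my_card_partition M hM
  set n := Fintype.card R
  set r := Nat.card Rˣ
  set m := Nat.card M
  ext x y
  have hA : ∀ a b : R, (unitaryCayley R).adjMatrix ℝ a b
      = if ¬ (a - b ∈ M) then (1:ℝ) else 0 := by
    intro a b
    rw [SimpleGraph.adjMatrix_apply]
    congr 1
    rw [my_uc_adj, ← my_not_isUnit_iff_mem M hM, not_not]
  have hmul : (((unitaryCayley R).adjMatrix ℝ) * ((unitaryCayley R).adjMatrix ℝ)) x y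
      = ((Finset.univ.filter (fun z : R => ¬ (x - z ∈ M) ∧ ¬ (z - y ∈ M))).card : ℝ) := by
    rw [Matrix.mul_apply]
    rw [Finset.sum_congr rfl (fun z _ => by
      rw [hA x z, hA z y, ite_zero_mul_ite_zero, one_mul])]
    rw [Finset.sum_boole]
  have hsplit : Finset.univ.filter (fun z : R => ¬ (x - z ∈ M) ∧ ¬ (z - y ∈ M))
      = Finset.univ \ ((Finset.univ.filter (fun z : R => x - z ∈ M))
          ∪ (Finset.univ.filter (fun z : R => z - y ∈ M))) := by
    ext z
    simp only [Finset.mem_filter, Finset.mem_univ, true_and, Finset.mem_sdiff,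
      Finset.mem_union, not_or]
  have hc1 : (Finset.univ.filter (fun z : R => x - z ∈ M)).card = m := my_card_coset M x
  have hc2 : (Finset.univ.filter (fun z : R => z - y ∈ M)).card = m := my_card_coset' M y
  simp only [Matrix.add_apply, Matrix.smul_apply, Matrix.of_apply, smul_eq_mul, mul_one]
  rw [hmul, hsplit, hA x y]
  by_cases hxy : x - y ∈ M
  · have heq : (Finset.univ.filter (fun z : R => x - z ∈ M))
        = (Finset.univ.filter (fun z : R => z - y ∈ M)) := by
      ext z
      simp only [Finset.mem_filter, Finset.mem_univ, true_and]
      constructor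
      · intro h
        have : z - y = (x - y) - (x - z) := by ring
        rw [this]; exact M.sub_mem hxy h
      · intro h
        have : x - z = (x - y) - (z - y) := by ring
        rw [this]; exact M.sub_mem hxy h
    rw [heq, Finset.union_self, Finset.card_sdiff_of_subset (Finset.subset_univ _), hc2,
      Finset.card_univ, if_neg (by simpa using hxy)]
    have hmn : m ≤ n := by omega
    rw [Nat.cast_sub hmn]
    push_cast [hn]
    ring
  · have hdisj : Disjoint (Finset.univ.filter (fun z : R => x - z ∈ M))
        (Finset.univ.filter (fun z : R => z - y ∈ M)) := by
      rw [Finset.disjoint_left]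
      intro z hz1 hz2
      simp only [Finset.mem_filter, Finset.mem_univ, true_and] at hz1 hz2
      apply hxy
      have : x - y = (x - z) + (z - y) := by ring
      rw [this]; exact M.add_mem hz1 hz2
    have hun : ((Finset.univ.filter (fun z : R => x - z ∈ M))
        ∪ (Finset.univ.filter (fun z : R => z - y ∈ M))).card = m + m := by
      rw [Finset.card_union_of_disjoint hdisj, hc1, hc2]
    have hle : m + m ≤ n := by
      rw [← hun]
      exact le_trans (Finset.card_le_univ _) (le_of_eq Finset.card_univ)
    rw [Finset.card_sdiff_of_subset (Finset.subset_univ _), hun, Finset.card_univ,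
      if_pos (by simpa using hxy), Nat.cast_sub hle]
    push_cast [hn]
    ring

lemma my_uc_JA :
    Matrix.of (fun (_ _ : R) => (1:ℝ)) * ((unitaryCayley R).adjMatrix ℝ)
      = (Nat.card Rˣ : ℝ) • Matrix.of (fun (_ _ : R) => (1:ℝ)) := by
  ext x y
  rw [Matrix.mul_apply]
  simp only [Matrix.of_apply, one_mul, Matrix.smul_apply, smul_eq_mul, mul_one]
  have : ∑ z : R, ((unitaryCayley R).adjMatrix ℝ) z y
      = ((Finset.univ.filter (fun z : R => (unitaryCayley R).Adj z y)).card : ℝ) := by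
    rw [Finset.sum_congr rfl (fun z _ => by rw [SimpleGraph.adjMatrix_apply]), Finset.sum_boole]
  rw [this]
  have hfil : Finset.univ.filter (fun z : R => (unitaryCayley R).Adj z y)
      = (unitaryCayley R).neighborFinset y := by
    rw [SimpleGraph.neighborFinset_eq_filter]
    apply Finset.filter_congr
    intro z _
    exact ⟨fun h => h.symm, fun h => h.symm⟩
  rw [hfil]
  rw [show ((unitaryCayley R).neighborFinset y).card = (unitaryCayley R).degree y from rfl]
  rw [my_degree]

lemma my_uc_annih (M : Ideal R) (hM : M.IsMaximal) :
    ((unitaryCayley R).adjMatrix ℝ)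
      * ((((unitaryCayley R).adjMatrix ℝ) + (Nat.card M : ℝ) • 1)
        * (((unitaryCayley R).adjMatrix ℝ) - (Nat.card Rˣ : ℝ) • 1)) = 0 := by
  set A := (unitaryCayley R).adjMatrix ℝ
  set m' : ℝ := (Nat.card M : ℝ)
  set r' : ℝ := (Nat.card Rˣ : ℝ)
  set J := Matrix.of (fun (_ _ : R) => (1:ℝ))
  have h1 : A * (A + m' • 1) = r' • J := by
    rw [Matrix.mul_add, Matrix.mul_smul, Matrix.mul_one]
    exact my_uc_quad M hM
  rw [← Matrix.mul_assoc, h1, Matrix.smul_mul, Matrix.mul_sub, my_uc_JA,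
    Matrix.mul_smul, Matrix.mul_one, sub_self, smul_zero]

end RingCount2


open Matrix in
lemma my_intertwine {V E K : Type*} [Fintype V] [Fintype E] [DecidableEq V] [DecidableEq E]
    (N : Matrix V E ℝ) (t : ℝ) (B : Matrix V K ℝ) :
    (Nᵀ * N - t • 1) * (Nᵀ * B) = Nᵀ * ((N * Nᵀ - t • 1) * B) := by
  rw [Matrix.sub_mul, Matrix.sub_mul, Matrix.mul_sub]
  congr 1
  · simp only [Matrix.mul_assoc]
  · simp only [Matrix.smul_mul, Matrix.mul_smul, Matrix.one_mul]

open Matrix Finset in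
/-- Let `R` be a finite local ring with maximal ideal `M` of order `m` such that `R ≇ F₃`
and `R/M ≇ F₂`, equivalently `|R|/m ≥ 3` and `|R^×| ≥ 3`. Then the energy of the line
graph of `G_R` equals `2|R|(|R^×| - 2)`. -/
theorem stmt_16 (R : Type*) [CommRing R] [IsLocalRing R] [Fintype R] [DecidableEq R]
    (M : Ideal R) (hM : M.IsMaximal) (m : ℕ) (hm : m = Nat.card M)
    (hq : 3 ≤ Fintype.card R / m) (hu : 3 ≤ Nat.card Rˣ) :
    graphEnergy (unitaryCayley R).lineGraph =
      2 * (Fintype.card R : ℝ) * ((Nat.card Rˣ : ℝ) - 2) := by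
  classical
  set G := unitaryCayley R with hG
  set N := eIncM G with hN
  set n := Fintype.card R with hn
  set r := Nat.card Rˣ with hr
  -- numeric facts
  have hmn : n = r + m := by rw [hm]; exact my_card_partition M hM
  have hm1 : 1 ≤ m := by
    rw [hm]
    exact Nat.one_le_iff_ne_zero.2 (Nat.card_ne_zero.2 ⟨⟨⟨0, M.zero_mem⟩⟩, Subtype.finite⟩)
  have h3m : 3 * m ≤ n := (Nat.le_div_iff_mul_le (by omega)).mp hq
  have hrm : m + 2 ≤ r := by omega
  -- regularity and matrix identities
  have hreg : ∀ v : R, G.degree v = r := fun v => my_degree v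
  have hW : N * Nᵀ = G.adjMatrix ℝ + (r : ℝ) • 1 := eIncM_mul_transpose G r hreg
  have hSeq : Nᵀ * N = G.lineGraph.adjMatrix ℝ + (2 : ℝ) • 1 := transpose_eIncM_mul G
  have hAL : G.lineGraph.adjMatrix ℝ = Nᵀ * N - (2:ℝ) • 1 :=
    eq_sub_of_add_eq hSeq.symm
  have hSherm : (Nᵀ * N).IsHermitian := by
    have := Matrix.isHermitian_conjTranspose_mul_self N
    rwa [Matrix.conjTranspose_eq_transpose_of_trivial] at this
  have hWherm : (N * Nᵀ).IsHermitian := by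
    have := Matrix.isHermitian_mul_conjTranspose_self N
    rwa [Matrix.conjTranspose_eq_transpose_of_trivial] at this
  -- annihilating identity for W = N * Nᵀ
  have e1 : N * Nᵀ - (r : ℝ) • 1 = G.adjMatrix ℝ := by rw [hW]; abel
  have e2 : N * Nᵀ - ((r : ℝ) - m) • 1 = G.adjMatrix ℝ + (m : ℝ) • 1 := by
    rw [hW, sub_smul]; abel
  have e3 : N * Nᵀ - (2 * (r : ℝ)) • 1 = G.adjMatrix ℝ - (r : ℝ) • 1 := by
    rw [hW, two_mul, add_smul]; abel
  have hannW : (N * Nᵀ - (r:ℝ) • 1) * ((N * Nᵀ - ((r:ℝ) - m) • 1)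
      * (N * Nᵀ - (2 * (r:ℝ)) • 1)) = 0 := by
    rw [e1, e2, e3, hm]
    exact my_uc_annih M hM
  have hannS : (Nᵀ * N - (r:ℝ) • 1) * ((Nᵀ * N - ((r:ℝ) - m) • 1)
      * ((Nᵀ * N - (2 * (r:ℝ)) • 1) * (Nᵀ * N))) = 0 := by
    have s1 : (Nᵀ * N - (2 * (r:ℝ)) • 1) * (Nᵀ * N)
        = Nᵀ * ((N * Nᵀ - (2 * (r:ℝ)) • 1) * N) := my_intertwine N _ N
    rw [s1, my_intertwine, my_intertwine]
    rw [show (N * Nᵀ - ((r:ℝ) - m) • 1) * ((N * Nᵀ - (2 * (r:ℝ)) • 1) * N)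
        = ((N * Nᵀ - ((r:ℝ) - m) • 1) * (N * Nᵀ - (2 * (r:ℝ)) • 1)) * N from
      (Matrix.mul_assoc _ _ _).symm]
    rw [show (N * Nᵀ - (r:ℝ) • 1) * ((N * Nᵀ - ((r:ℝ) - m) • 1)
          * (N * Nᵀ - (2 * (r:ℝ)) • 1) * N)
        = ((N * Nᵀ - (r:ℝ) • 1) * ((N * Nᵀ - ((r:ℝ) - m) • 1)
          * (N * Nᵀ - (2 * (r:ℝ)) • 1))) * N from (Matrix.mul_assoc _ _ _).symm]
    rw [hannW, Matrix.zero_mul, Matrix.mul_zero]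
  -- eigenvalues of S are 0 or ≥ 2
  have hrR : (3:ℝ) ≤ (r:ℝ) := by exact_mod_cast hu
  have hrmR : (2:ℝ) ≤ (r:ℝ) - (m:ℝ) := by
    have : ((m:ℝ)) + 2 ≤ (r:ℝ) := by exact_mod_cast hrm
    linarith
  have h2 : ∀ i, hSherm.eigenvalues i = 0 ∨ 2 ≤ hSherm.eigenvalues i := by
    intro i
    rcases my_eig_root4 _ hSherm _ _ _ hannS i with h | h | h | h
    · right; rw [h]; linarith
    · right; rw [h]; linarith
    · right; rw [h]; linarith
    · left; exact h
  -- rank computation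
  have hWvals : ∀ i, hWherm.eigenvalues i ≠ 0 := by
    intro i
    rcases my_eig_root3 _ hWherm _ _ _ hannW i with h | h | h <;> rw [h] <;> intro hc <;>
      linarith
  have hk : Fintype.card {i // hSherm.eigenvalues i ≠ 0} = n := by
    rw [← hSherm.rank_eq_card_non_zero_eigs]
    rw [Matrix.rank_transpose_mul_self N, ← Matrix.rank_self_mul_transpose N]
    rw [hWherm.rank_eq_card_non_zero_eigs]
    rw [Fintype.card_subtype]
    rw [Finset.filter_true_of_mem (fun i _ => hWvals i), Finset.card_univ, hn]
  -- trace
  have hT : (Nᵀ * N).trace = 2 * (Fintype.card G.edgeSet : ℝ) := by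
    rw [hSeq, Matrix.trace_add, Matrix.trace_smul, Matrix.trace_one]
    rw [SimpleGraph.trace_adjMatrix]
    simp
  -- handshake
  have hhs : 2 * Fintype.card G.edgeSet = n * r := by
    have h1 := G.sum_degrees_eq_twice_card_edges
    rw [Finset.sum_congr rfl (fun v _ => hreg v), Finset.sum_const, Finset.card_univ,
      smul_eq_mul] at h1
    have h2 : G.edgeFinset.card = Fintype.card G.edgeSet := Set.toFinset_card _
    rw [h2] at h1
    rw [← h1, hn]
  -- final computation
  have henergy := my_energy_shift (Nᵀ * N) hSherm (2 * (Fintype.card G.edgeSet : ℝ)) n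
    h2 hT hk
  have : graphEnergy G.lineGraph
      = (((Nᵀ * N - (2:ℝ) • 1).charpoly.roots).map (fun μ => |μ|)).sum := by
    rw [graphEnergy, hAL]
  rw [this, henergy]
  have hcast : 2 * (Fintype.card G.edgeSet : ℝ) = (n : ℝ) * r := by exact_mod_cast hhs
  rw [hn] at hcast ⊢
  rw [hr]
  linarith [hcast]
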